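/- Let f, g : ℝ → ℝ be differentiable, G : ℝ → ℝ a differentiable CDF with density G', c ∈ ℝ, and define h(x) = G(f(x)-g(x)-c)·f(x) + ∫_{f(x)-g(x)-c}^∞ (y + g(x) + c) dG(y). Then h'(x) = G(f(x)-g(x)-c)·f'(x) + (1 - G(f(x)-g(x)-c))·g'(x). -/

import Mathlib

open MeasureTheory Set

open MeasureTheory Set Filter

lemma Phi_hasDeriv (μ : Measure ℝ) [IsProbabilityMeasure μ] (G : ℝ → ℝ)
    (hG : Differentiable ℝ G) (hcdf : ∀ t, G t = (μ (Iic t)).toReal)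
    (hmoment : Integrable (fun y : ℝ => y) μ) (t : ℝ) :
    HasDerivAt (fun s => ∫ y in Ioi s, y ∂μ) (-(t * deriv G t)) t := by
  set Φ : ℝ → ℝ := fun s => ∫ y in Ioi s, y ∂μ with hΦ
  have stepA : ∀ s u : ℝ, s ≤ u → Φ s = (∫ y in Ioc s u, y ∂μ) + Φ u := by
    intro s u hsu
    rw [hΦ]
    simp only
    rw [← Ioc_union_Ioi_eq_Ioi hsu,
      setIntegral_union (Ioc_disjoint_Ioi le_rfl) measurableSet_Ioi
        hmoment.integrableOn hmoment.integrableOn]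
  have stepB : ∀ s u : ℝ, s ≤ u → G u - G s = (μ (Ioc s u)).toReal := by
    intro s u hsu
    rw [hcdf, hcdf, ← Iic_union_Ioc_eq_Iic hsu,
      measure_union (Iic_disjoint_Ioc le_rfl) measurableSet_Ioc,
      ENNReal.toReal_add (measure_ne_top μ _) (measure_ne_top μ _)]
    ring
  have key : ∀ s : ℝ, |Φ s - Φ t + t * (G s - G t)| ≤ |s - t| * |G s - G t| := by
    intro s
    rcases le_total t s with hts | hst
    · have hA := stepA t s hts
      have hB := stepB t s hts
      set m := (μ (Ioc t s)).toReal with hm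
      have hm0 : 0 ≤ m := ENNReal.toReal_nonneg
      have hint : ∫ y in Ioc t s, (y - t) ∂μ = (∫ y in Ioc t s, y ∂μ) - t * m := by
        rw [integral_sub hmoment.integrableOn (integrableOn_const (measure_ne_top μ _)),
          setIntegral_const, smul_eq_mul, measureReal_def, ← hm]
        ring
      have h1 : 0 ≤ ∫ y in Ioc t s, (y - t) ∂μ :=
        setIntegral_nonneg measurableSet_Ioc (fun y hy => by linarith [hy.1.le])
      have h2 : ∫ y in Ioc t s, (y - t) ∂μ ≤ (s - t) * m := by
        calc ∫ y in Ioc t s, (y - t) ∂μ ≤ ∫ _ in Ioc t s, (s - t) ∂μ := by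
              apply setIntegral_mono_on
                (hmoment.integrableOn.sub (integrableOn_const (measure_ne_top μ _)))
                (integrableOn_const (measure_ne_top μ _)) measurableSet_Ioc
              intro y hy
              simp only [Pi.sub_apply]
              linarith [hy.2]
          _ = (s - t) * m := by rw [setIntegral_const, smul_eq_mul, measureReal_def, ← hm]; ring
      have hexpr : Φ s - Φ t + t * (G s - G t) = -(∫ y in Ioc t s, (y - t) ∂μ) := by
        rw [hint, hB, hA]; ring
      have habs : |G s - G t| = m := by rw [hB, abs_of_nonneg hm0]
      rw [hexpr, abs_neg, abs_of_nonneg h1, habs,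
        abs_of_nonneg (by linarith : (0:ℝ) ≤ s - t)]
      exact h2
    · have hA := stepA s t hst
      have hB := stepB s t hst
      set m := (μ (Ioc s t)).toReal with hm
      have hm0 : 0 ≤ m := ENNReal.toReal_nonneg
      have hint : ∫ y in Ioc s t, (y - t) ∂μ = (∫ y in Ioc s t, y ∂μ) - t * m := by
        rw [integral_sub hmoment.integrableOn (integrableOn_const (measure_ne_top μ _)),
          setIntegral_const, smul_eq_mul, measureReal_def, ← hm]
        ring
      have h1 : ∫ y in Ioc s t, (y - t) ∂μ ≤ 0 :=
        setIntegral_nonpos measurableSet_Ioc (fun y hy => by linarith [hy.2])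
      have h2 : -((t - s) * m) ≤ ∫ y in Ioc s t, (y - t) ∂μ := by
        calc -((t - s) * m) = ∫ _ in Ioc s t, (s - t) ∂μ := by
              rw [setIntegral_const, smul_eq_mul, measureReal_def, ← hm]; ring
          _ ≤ ∫ y in Ioc s t, (y - t) ∂μ := by
              apply setIntegral_mono_on (integrableOn_const (measure_ne_top μ _))
                (hmoment.integrableOn.sub (integrableOn_const (measure_ne_top μ _)))
                measurableSet_Ioc
              intro y hy
              simp only [Pi.sub_apply]
              linarith [hy.1.le]
      have hexpr : Φ s - Φ t + t * (G s - G t) = ∫ y in Ioc s t, (y - t) ∂μ := by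
        have hB' : G s - G t = -m := by linarith
        rw [hint, hB', hA]; ring
      have habs : |G s - G t| = m := by
        rw [abs_sub_comm, hB, abs_of_nonneg hm0]
      rw [hexpr, abs_of_nonpos h1, habs, abs_of_nonpos (by linarith : s - t ≤ 0)]
      linarith
  have hF : HasDerivAt (fun s => Φ s + t * G s) 0 t := by
    rw [hasDerivAt_iff_isLittleO, Asymptotics.isLittleO_iff]
    intro ε hε
    have hcont : Tendsto (fun s => |G s - G t|) (nhds t) (nhds 0) := by
      have h : ContinuousAt (fun s => |G s - G t|) t :=
        ((hG t).continuousAt.sub continuousAt_const).abs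
      simpa using h.tendsto
    filter_upwards [hcont.eventually_lt_const hε] with s hs
    have heq : Φ s + t * G s - (Φ t + t * G t) - (s - t) • (0:ℝ)
        = Φ s - Φ t + t * (G s - G t) := by
      simp; ring
    rw [Real.norm_eq_abs, Real.norm_eq_abs, heq]
    calc |Φ s - Φ t + t * (G s - G t)| ≤ |s - t| * |G s - G t| := key s
      _ ≤ |s - t| * ε := mul_le_mul_of_nonneg_left hs.le (abs_nonneg _)
      _ = ε * |s - t| := mul_comm _ _
  have hfinal : HasDerivAt Φ (0 - t * deriv G t) t := by
    have h2 : HasDerivAt (fun s => t * G s) (t * deriv G t) t :=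
      ((hG t).hasDerivAt).const_mul t
    simpa [Pi.sub_def] using hF.sub h2
  simpa using hfinal

/-- Envelope-theorem special case (Lemma A.1): with `G` the CDF of a probability
measure `μ` with finite first moment, the function
`h x = G (f x - g x - c) * f x + ∫_{(f x - g x - c, ∞)} (y + g x + c) dμ(y)`
has derivative `G (f x - g x - c) * f' x + (1 - G (f x - g x - c)) * g' x`. -/
theorem stmt_0
    (f g G f' g' : ℝ → ℝ) (μ : Measure ℝ) [IsProbabilityMeasure μ]
    (hf : ∀ x, HasDerivAt f (f' x) x)
    (hg : ∀ x, HasDerivAt g (g' x) x)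
    (hG : Differentiable ℝ G)
    (hcdf : ∀ t, G t = (μ (Iic t)).toReal)
    (hmoment : Integrable (fun y : ℝ => y) μ)
    (c : ℝ) (h : ℝ → ℝ)
    (hh : ∀ x, h x = G (f x - g x - c) * f x
      + ∫ y in Ioi (f x - g x - c), (y + g x + c) ∂μ)
    (x : ℝ) :
    HasDerivAt h (G (f x - g x - c) * f' x + (1 - G (f x - g x - c)) * g' x) x := by
  have hIoi : ∀ t : ℝ, (μ (Ioi t)).toReal = 1 - G t := by
    intro t
    rw [hcdf, ← compl_Iic, measure_compl measurableSet_Iic (measure_ne_top μ _), measure_univ,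
      ENNReal.toReal_sub_of_le prob_le_one (by simp)]
    simp
  have hsplit : ∀ (t A : ℝ), (∫ y in Ioi t, (y + A) ∂μ)
      = (∫ y in Ioi t, y ∂μ) + A * (1 - G t) := by
    intro t A
    rw [integral_add hmoment.integrableOn (integrableOn_const (measure_ne_top μ _)),
      setIntegral_const, smul_eq_mul, measureReal_def, hIoi, mul_comm]
  have hrepr : h = fun x => G (f x - g x - c) * f x
      + ((∫ y in Ioi (f x - g x - c), y ∂μ) + (g x + c) * (1 - G (f x - g x - c))) := by
    funext z
    rw [hh z]
    congr 1
    have : ∀ y : ℝ, y + g z + c = y + (g z + c) := fun y => by ring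
    simp_rw [this]
    exact hsplit _ _
  rw [hrepr]
  have ha : HasDerivAt (fun z => f z - g z - c) (f' x - g' x) x :=
    ((hf x).sub (hg x)).sub_const c
  set a : ℝ := f x - g x - c with hadef
  set D : ℝ := deriv G a with hD
  have hGa : HasDerivAt (fun z => G (f z - g z - c)) (D * (f' x - g' x)) x :=
    (hG a).hasDerivAt.comp x ha
  have hΦa : HasDerivAt (fun z => ∫ y in Ioi (f z - g z - c), y ∂μ)
      (-(a * D) * (f' x - g' x)) x :=
    by have := (Phi_hasDeriv μ G hG hcdf hmoment a).comp x ha; exact this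
  have h3 : HasDerivAt (fun z => (g z + c) * (1 - G (f z - g z - c)))
      (g' x * (1 - G a) + (g x + c) * (0 - D * (f' x - g' x))) x :=
    ((hg x).add_const c).mul ((hasDerivAt_const x (1:ℝ)).sub hGa)
  have := (hGa.mul (hf x)).add (hΦa.add h3)
  convert this using 1
  · rfl
  · rfl
  · rfl
  rw [hadef]
  ring
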